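/- Let ψ : S_n → S_n be linear with ψ(C_n) = C_n and suppose for every t there is b_t ∈ T_n with ψ(e_{tt}) = e_{tt} + b_t. Then ψ is the identity map on S_n. -/

import Mathlib

open Matrix

/-- A matrix is copositive if its quadratic form is nonnegative on the nonnegative orthant. -/
def Copositive {m : Type*} [Fintype m] (a : Matrix m m ℝ) : Prop :=
  ∀ u : m → ℝ, (∀ i, 0 ≤ u i) → 0 ≤ u ⬝ᵥ a *ᵥ u

/-- The submodule of symmetric n×n real matrices. -/
def Sn (n : ℕ) : Submodule ℝ (Matrix (Fin n) (Fin n) ℝ) where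
  carrier := {a | a.IsSymm}
  add_mem' := fun ha hb => ha.add hb
  zero_mem' := Matrix.isSymm_zero
  smul_mem' := fun c a ha => ha.smul c

/-- The copositive cone, as a subset of the symmetric matrices. -/
def Cn (n : ℕ) : Set (Sn n) := {a | Copositive a.1}

/-- The set A^t : symmetric matrices with (t,t) entry zero, all other entries positive. -/
def At (n : ℕ) (t : Fin n) : Set (Sn n) :=
  {a | a.1 t t = 0 ∧ ∀ i j, (i, j) ≠ (t, t) → 0 < a.1 i j}

/-- T_n : symmetric nonnegative matrices with zero diagonal. -/
def Tn (n : ℕ) : Set (Sn n) := {a | (∀ i j, 0 ≤ a.1 i j) ∧ ∀ i, a.1 i i = 0}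

/-- A monomial matrix: exactly one nonzero entry in each row and column. -/
def IsMonomial {n : ℕ} (m : Matrix (Fin n) (Fin n) ℝ) : Prop :=
  (∀ i, ∃! j, m i j ≠ 0) ∧ (∀ j, ∃! i, m i j ≠ 0)

section helpers
variable {n : ℕ}

lemma qf_std (i j : Fin n) (c : ℝ) (u : Fin n → ℝ) :
    u ⬝ᵥ (Matrix.single i j c) *ᵥ u = c * (u i * u j) := by
  simp [dotProduct, mulVec, Matrix.single, ite_and, Finset.mul_sum, mul_ite, ite_mul]
  ring

lemma qf_pair (A : Matrix (Fin n) (Fin n) ℝ) (k l : Fin n) (a b : ℝ) :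
    ((Pi.single k a : Fin n → ℝ) + Pi.single l b) ⬝ᵥ A *ᵥ ((Pi.single k a : Fin n → ℝ) + Pi.single l b)
      = a * A k k * a + a * A k l * b + b * A l k * a + b * A l l * b := by
  simp [add_dotProduct, dotProduct_add, mulVec_add, mulVec_single, dotProduct_single,
    single_dotProduct]
  ring

lemma qf_single (A : Matrix (Fin n) (Fin n) ℝ) (k : Fin n) (a : ℝ) :
    (Pi.single k a : Fin n → ℝ) ⬝ᵥ A *ᵥ Pi.single k a = a * A k k * a := by
  simp [mulVec_single, single_dotProduct]
  ring

lemma single_nonneg' {k : Fin n} {a : ℝ} (ha : 0 ≤ a) (m : Fin n) : 0 ≤ (Pi.single k a : Fin n → ℝ) m := by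
  rcases eq_or_ne m k with rfl | hm
  · simpa using ha
  · simp [Pi.single_apply, hm]

lemma pair_nonneg {k l : Fin n} {a b : ℝ} (ha : 0 ≤ a) (hb : 0 ≤ b) (m : Fin n) :
    0 ≤ ((Pi.single k a + Pi.single l b : Fin n → ℝ)) m :=
  add_nonneg (single_nonneg' ha m) (single_nonneg' hb m)

lemma copos_of_nonneg {A : Matrix (Fin n) (Fin n) ℝ} (hA : ∀ k l, 0 ≤ A k l) :
    Copositive A := by
  intro u hu
  simp only [dotProduct, mulVec]
  refine Finset.sum_nonneg fun k _ => mul_nonneg (hu k) ?_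
  exact Finset.sum_nonneg fun l _ => mul_nonneg (hA k l) (hu l)

lemma cop_diag {A : Matrix (Fin n) (Fin n) ℝ} (hA : Copositive A) (k : Fin n) : 0 ≤ A k k := by
  have := hA (Pi.single k 1) (single_nonneg' zero_le_one)
  simpa [qf_single] using this

lemma cop_row {A : Matrix (Fin n) (Fin n) ℝ} (hA : Copositive A) (hs : A.IsSymm) (k : Fin n)
    (hk : A k k = 0) (l : Fin n) : 0 ≤ A k l := by
  rcases eq_or_ne l k with rfl | hlk
  · rw [hk]
  have key : ∀ s : ℝ, 0 ≤ s → 0 ≤ 2 * s * A k l + s * s * A l l := by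
    intro s hss
    have := hA (Pi.single k 1 + Pi.single l s) (pair_nonneg zero_le_one hss)
    rw [qf_pair] at this
    have hsym : A l k = A k l := hs.apply k l
    nlinarith [this]
  by_contra hneg
  push_neg at hneg
  rcases le_or_gt (A l l) 0 with h1 | h1
  · have := key 1 zero_le_one; nlinarith
  · have hspos : 0 < -A k l / A l l := div_pos (neg_pos.2 hneg) h1
    have := key _ hspos.le
    have hc : -A k l / A l l * A l l = -A k l := div_mul_cancel₀ _ (ne_of_gt h1)
    nlinarith [mul_pos hspos (neg_pos.2 hneg)]

end helpers

section helpers2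
open Matrix
variable {n : ℕ}

lemma std_entry (i j k l : Fin n) (c : ℝ) :
    Matrix.single i j c k l = if i = k ∧ j = l then c else 0 := rfl

lemma extreme_ett {t : Fin n} {P Q : Matrix (Fin n) (Fin n) ℝ}
    (hP : Copositive P) (hPs : P.IsSymm) (hQ : Copositive Q) (hQs : Q.IsSymm)
    (hsum : P + Q = Matrix.single t t 1) :
    P = (P t t) • Matrix.single t t 1 := by
  have hent : ∀ k l, P k l + Q k l = Matrix.single t t 1 k l := by
    intro k l; rw [← hsum]; rfl
  have hdiag : ∀ k, k ≠ t → P k k = 0 := by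
    intro k hk
    have h1 := hent k k
    rw [std_entry] at h1
    simp [Ne.symm hk] at h1
    have := cop_diag hP k; have := cop_diag hQ k
    linarith
  have hrow : ∀ k l, k ≠ t → P k l = 0 := by
    intro k l hk
    have h1 := hent k l
    rw [std_entry] at h1
    simp [Ne.symm hk] at h1
    have := cop_row hP hPs k (hdiag k hk) l
    have hqd : Q k k = 0 := by
      have h2 := hent k k
      rw [std_entry] at h2
      simp [Ne.symm hk] at h2
      have := cop_diag hP k; have := cop_diag hQ k
      linarith
    have := cop_row hQ hQs k hqd l
    linarith
  ext k l
  simp only [Matrix.smul_apply, std_entry, smul_eq_mul, mul_ite, mul_one, mul_zero]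
  rcases eq_or_ne k t with rfl | hk
  · rcases eq_or_ne l k with rfl | hl
    · simp
    · have h0 : P l k = 0 := hrow l k hl
      rw [hPs.apply l k, h0]
      have : ¬(k = k ∧ k = l) := fun hc => hl hc.2.symm
      rw [if_neg this]
  · rw [hrow k l hk]
    have : ¬(t = k ∧ t = l) := fun hc => hk hc.1.symm
    rw [if_neg this]

lemma L1 {i j : Fin n} (hij : i ≠ j) {α β : ℝ} (hα : 0 < α) (hβ : 0 < β) (s : ℝ) :
    Copositive (α • Matrix.single i i (1:ℝ) + β • Matrix.single j j 1
        + s • (Matrix.single i j 1 + Matrix.single j i 1))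
      ↔ -Real.sqrt (α * β) ≤ s := by
  have ha2 : Real.sqrt α * Real.sqrt α = α := Real.mul_self_sqrt hα.le
  have hb2 : Real.sqrt β * Real.sqrt β = β := Real.mul_self_sqrt hβ.le
  have hab : Real.sqrt (α * β) = Real.sqrt α * Real.sqrt β := Real.sqrt_mul hα.le β
  have hapos : 0 < Real.sqrt α := Real.sqrt_pos.2 hα
  have hbpos : 0 < Real.sqrt β := Real.sqrt_pos.2 hβ
  have hqf : ∀ u : Fin n → ℝ,
      u ⬝ᵥ (α • Matrix.single i i (1:ℝ) + β • Matrix.single j j 1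
        + s • (Matrix.single i j 1 + Matrix.single j i 1)) *ᵥ u
      = α * (u i * u i) + β * (u j * u j) + s * (u i * u j) + s * (u j * u i) := by
    intro u
    simp [add_mulVec, smul_mulVec, dotProduct_add, dotProduct_smul, qf_std,
      smul_eq_mul]
    ring
  constructor
  · intro hcop
    set u : Fin n → ℝ := Pi.single i (Real.sqrt β) + Pi.single j (Real.sqrt α) with hu
    have hun : ∀ m, 0 ≤ u m := pair_nonneg hbpos.le hapos.le
    have h0 := hcop u hun
    rw [hqf] at h0
    have hui : u i = Real.sqrt β := by
      simp [hu, Pi.single_apply, hij, fun h : i = j => hij h]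
    have huj : u j = Real.sqrt α := by
      simp [hu, Pi.single_apply, hij.symm, fun h : j = i => hij h.symm]
    rw [hui, huj] at h0
    rw [hab]
    nlinarith [mul_pos hapos hbpos, h0]
  · intro hs u hu
    rw [hqf]
    have h1 : 0 ≤ u i * u j := mul_nonneg (hu i) (hu j)
    have hs' : -(Real.sqrt α * Real.sqrt β) ≤ s := by rw [← hab]; exact hs
    nlinarith [sq_nonneg (Real.sqrt α * u i - Real.sqrt β * u j), h1, hs']

end helpers2

section helpers3
open Matrix
variable {n : ℕ}

lemma le_zero_of_mul {x y : ℝ} (h : ∀ c : ℝ, 0 < c → c * x ≤ y) : x ≤ 0 := by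
  by_contra hx
  push_neg at hx
  have := h ((|y| + 1) / x) (by positivity)
  rw [div_mul_cancel₀ _ (ne_of_gt hx)] at this
  linarith [le_abs_self y]

lemma le_zero_of_le_all {x : ℝ} (h : ∀ c : ℝ, 0 < c → x ≤ c) : x ≤ 0 := by
  by_contra hx; push_neg at hx; linarith [h (x/2) (by linarith)]

lemma pair_apply (k l m : Fin n) (a b : ℝ) :
    ((Pi.single k a + Pi.single l b : Fin n → ℝ)) m
      = (if m = k then a else 0) + (if m = l then b else 0) := by
  simp [Pi.single_apply]

lemma keyB {i j : Fin n} (hij : i ≠ j) {B : Matrix (Fin n) (Fin n) ℝ} (hBs : B.IsSymm)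
    (H : ∀ α β s : ℝ, 0 < α → 0 < β →
      (Copositive (α • Matrix.single i i (1:ℝ) + β • Matrix.single j j 1 + s • B)
        ↔ -Real.sqrt (α * β) ≤ s)) :
    B = Matrix.single i j 1 + Matrix.single j i 1 := by
  have hqf : ∀ (α β s : ℝ) (u : Fin n → ℝ),
      u ⬝ᵥ (α • Matrix.single i i (1:ℝ) + β • Matrix.single j j 1 + s • B) *ᵥ u
        = α * (u i * u i) + β * (u j * u j) + s * (u ⬝ᵥ B *ᵥ u) := by
    intro α β s u
    simp [add_mulVec, smul_mulVec, dotProduct_add, dotProduct_smul, qf_std, smul_eq_mul]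
    try ring
  have F2 : ∀ u : Fin n → ℝ, (∀ m, 0 ≤ u m) → 0 ≤ u ⬝ᵥ B *ᵥ u := by
    intro u hu
    by_contra hq
    push_neg at hq
    set q := u ⬝ᵥ B *ᵥ u with hqdef
    set s0 : ℝ := (u i * u i + u j * u j + 1) / (-q) with hs0
    have hs0n : 0 ≤ s0 := by
      apply div_nonneg
      · nlinarith [mul_nonneg (hu i) (hu i), mul_nonneg (hu j) (hu j)]
      · linarith
    have hcop := (H 1 1 s0 one_pos one_pos).2
      (by rw [one_mul, Real.sqrt_one]; linarith)
    have h0 := hcop u hu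
    rw [hqf] at h0
    have hcan : s0 * (-q) = u i * u i + u j * u j + 1 :=
      div_mul_cancel₀ _ (ne_of_gt (neg_pos.2 hq))
    have : s0 * q = -(s0 * (-q)) := by ring
    rw [hcan] at this
    linarith
  have F1 : ∀ c : ℝ, 0 < c → ∀ u : Fin n → ℝ, (∀ m, 0 ≤ u m) →
      c * (u ⬝ᵥ B *ᵥ u) ≤ u i * u i + c ^ 2 * (u j * u j) := by
    intro c hc u hu
    have hcop := (H 1 (c ^ 2) (-c) one_pos (by positivity)).2
      (by rw [one_mul, Real.sqrt_sq hc.le])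
    have h0 := hcop u hu
    rw [hqf] at h0
    linarith
  -- single and pair vectors
  have hsingle : ∀ k : Fin n, (Pi.single k 1 : Fin n → ℝ) ⬝ᵥ B *ᵥ Pi.single k 1 = B k k := by
    intro k; rw [qf_single]; ring
  have hpairq : ∀ k l : Fin n, k ≠ l →
      ((Pi.single k 1 + Pi.single l 1 : Fin n → ℝ)) ⬝ᵥ B *ᵥ
        ((Pi.single k 1 + Pi.single l 1 : Fin n → ℝ))
        = B k k + 2 * B k l + B l l := by
    intro k l hkl
    rw [qf_pair, hBs.apply k l]
    ring
  have hBii : B i i = 0 := by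
    have h1 : ∀ c : ℝ, 0 < c → c * B i i ≤ 1 := by
      intro c hc
      have := F1 c hc (Pi.single i 1) (single_nonneg' zero_le_one)
      rw [hsingle] at this
      have hi : (Pi.single i 1 : Fin n → ℝ) i = 1 := by simp
      have hj : (Pi.single i 1 : Fin n → ℝ) j = 0 := Pi.single_eq_of_ne hij.symm 1
      rw [hi, hj] at this
      linarith
    have h2 : 0 ≤ B i i := by
      have := F2 (Pi.single i 1) (single_nonneg' zero_le_one)
      rwa [hsingle] at this
    exact le_antisymm (le_zero_of_mul h1) h2
  have hBjj : B j j = 0 := by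
    have h1 : ∀ c : ℝ, 0 < c → B j j ≤ c := by
      intro c hc
      have := F1 c hc (Pi.single j 1) (single_nonneg' zero_le_one)
      rw [hsingle] at this
      have hi : (Pi.single j 1 : Fin n → ℝ) i = 0 := Pi.single_eq_of_ne hij 1
      have hj : (Pi.single j 1 : Fin n → ℝ) j = 1 := by simp
      rw [hi, hj] at this
      nlinarith
    have h2 : 0 ≤ B j j := by
      have := F2 (Pi.single j 1) (single_nonneg' zero_le_one)
      rwa [hsingle] at this
    exact le_antisymm (le_zero_of_le_all h1) h2
  have hdiagk : ∀ k : Fin n, k ≠ i → k ≠ j → B k k = 0 := by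
    intro k hki hkj
    have h1 := F1 1 one_pos (Pi.single k 1) (single_nonneg' zero_le_one)
    rw [hsingle] at h1
    have hi : (Pi.single k 1 : Fin n → ℝ) i = 0 := Pi.single_eq_of_ne (Ne.symm hki) 1
    have hj : (Pi.single k 1 : Fin n → ℝ) j = 0 := Pi.single_eq_of_ne (Ne.symm hkj) 1
    rw [hi, hj] at h1
    have h2 : 0 ≤ B k k := by
      have := F2 (Pi.single k 1) (single_nonneg' zero_le_one)
      rwa [hsingle] at this
    nlinarith
  have hBik : ∀ k : Fin n, k ≠ i → k ≠ j → B i k = 0 := by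
    intro k hki hkj
    have hun := pair_nonneg (k := i) (l := k) zero_le_one zero_le_one
    have hq := hpairq i k (Ne.symm hki)
    rw [hBii, hdiagk k hki hkj] at hq
    have hui : ((Pi.single i 1 + Pi.single k 1 : Fin n → ℝ)) i = 1 := by
      rw [pair_apply]; simp [Ne.symm hki]
    have huj : ((Pi.single i 1 + Pi.single k 1 : Fin n → ℝ)) j = 0 := by
      rw [pair_apply]; simp [hij.symm, Ne.symm hkj]
    have h1 : ∀ c : ℝ, 0 < c → c * (2 * B i k) ≤ 1 := by
      intro c hc
      have := F1 c hc _ hun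
      rw [hq, hui, huj] at this
      linarith
    have h2 : 0 ≤ 2 * B i k := by
      have := F2 _ hun
      rw [hq] at this
      linarith
    have := le_zero_of_mul h1
    linarith
  have hBjk : ∀ k : Fin n, k ≠ i → k ≠ j → B j k = 0 := by
    intro k hki hkj
    have hun := pair_nonneg (k := j) (l := k) zero_le_one zero_le_one
    have hq := hpairq j k (Ne.symm hkj)
    rw [hBjj, hdiagk k hki hkj] at hq
    have hui : ((Pi.single j 1 + Pi.single k 1 : Fin n → ℝ)) i = 0 := by
      rw [pair_apply]; simp [hij, Ne.symm hki]
    have huj : ((Pi.single j 1 + Pi.single k 1 : Fin n → ℝ)) j = 1 := by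
      rw [pair_apply]; simp [Ne.symm hkj]
    have h1 : ∀ c : ℝ, 0 < c → 2 * B j k ≤ c := by
      intro c hc
      have := F1 c hc _ hun
      rw [hq, hui, huj] at this
      nlinarith
    have h2 : 0 ≤ 2 * B j k := by
      have := F2 _ hun
      rw [hq] at this
      linarith
    have := le_zero_of_le_all h1
    linarith
  have hBkl : ∀ k l : Fin n, k ≠ i → k ≠ j → l ≠ i → l ≠ j → B k l = 0 := by
    intro k l hki hkj hli hlj
    rcases eq_or_ne k l with rfl | hkl
    · exact hdiagk k hki hkj
    have hun := pair_nonneg (k := k) (l := l) zero_le_one zero_le_one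
    have hq := hpairq k l hkl
    rw [hdiagk k hki hkj, hdiagk l hli hlj] at hq
    have hui : ((Pi.single k 1 + Pi.single l 1 : Fin n → ℝ)) i = 0 := by
      rw [pair_apply]; simp [Ne.symm hki, Ne.symm hli]
    have huj : ((Pi.single k 1 + Pi.single l 1 : Fin n → ℝ)) j = 0 := by
      rw [pair_apply]; simp [Ne.symm hkj, Ne.symm hlj]
    have h1 := F1 1 one_pos _ hun
    rw [hq, hui, huj] at h1
    have h2 : 0 ≤ B k k + 2 * B k l + B l l := by
      have := F2 _ hun
      rwa [hpairq k l hkl] at this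
    rw [hdiagk k hki hkj, hdiagk l hli hlj] at h2
    nlinarith
  -- the remaining entry
  set b := B i j with hbdef
  have hq' := hpairq i j hij
  rw [hBii, hBjj, ← hbdef] at hq'
  have hun := pair_nonneg (k := i) (l := j) zero_le_one zero_le_one
  have hui : ((Pi.single i 1 + Pi.single j 1 : Fin n → ℝ)) i = 1 := by
    rw [pair_apply]; simp [hij]
  have huj : ((Pi.single i 1 + Pi.single j 1 : Fin n → ℝ)) j = 1 := by
    rw [pair_apply]; simp [hij.symm]
  have hb0 : 0 ≤ b := by
    have := F2 _ hun
    rw [hq'] at this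
    linarith
  have hb1 : b ≤ 1 := by
    have := F1 1 one_pos _ hun
    rw [hq', hui, huj] at this
    linarith
  have hB : B = Matrix.single i j b + Matrix.single j i b := by
    ext k l
    simp only [Matrix.add_apply, std_entry]
    by_cases hki : k = i
    · by_cases hlj : l = j
      · rw [hki, hlj, if_pos ⟨rfl, rfl⟩, if_neg (fun hc => hij hc.1.symm), ← hbdef]
        ring
      · by_cases hli : l = i
        · rw [hki, hli, hBii, if_neg (fun hc => hij hc.2.symm),
            if_neg (fun hc => hij hc.1.symm)]
          ring
        · rw [hki, hBik l hli hlj, if_neg (fun hc : i = i ∧ j = l => hlj hc.2.symm),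
            if_neg (fun hc : j = i ∧ i = l => hij hc.1.symm)]
          ring
    · by_cases hkj : k = j
      · by_cases hli : l = i
        · rw [hkj, hli, hBs.apply i j, ← hbdef, if_neg (fun hc : i = j ∧ j = i => hij hc.1),
            if_pos ⟨rfl, rfl⟩]
          ring
        · by_cases hlj : l = j
          · rw [hkj, hlj, hBjj, if_neg (fun hc : i = j ∧ j = j => hij hc.1),
              if_neg (fun hc : j = j ∧ i = j => hij hc.2)]
            ring
          · rw [hkj, hBjk l hli hlj, if_neg (fun hc : i = j ∧ j = l => hij hc.1),
              if_neg (fun hc : j = j ∧ i = l => hli hc.2.symm)]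
            ring
      · rw [if_neg (fun hc : i = k ∧ j = l => hki hc.1.symm),
          if_neg (fun hc : j = k ∧ i = l => hkj hc.1.symm)]
        by_cases hli : l = i
        · rw [hli, hBs.apply i k, hBik k hki hkj]
          ring
        · by_cases hlj : l = j
          · rw [hlj, hBs.apply j k, hBjk k hki hkj]
            ring
          · rw [hBkl k l hki hkj hli hlj]
            ring
  -- now pin down b = 1
  have hbq : ∀ u : Fin n → ℝ, u ⬝ᵥ B *ᵥ u = b * (u i * u j) + b * (u j * u i) := by
    intro u
    rw [hB, add_mulVec, dotProduct_add, qf_std, qf_std]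
  rcases eq_or_lt_of_le hb0 with hb | hb
  · exfalso
    have hcop : Copositive ((1:ℝ) • Matrix.single i i (1:ℝ) + (1:ℝ) • Matrix.single j j 1
        + (-2 : ℝ) • B) := by
      intro u hu
      rw [hqf, hbq, ← hb]
      nlinarith [mul_nonneg (hu i) (hu i), mul_nonneg (hu j) (hu j)]
    have := (H 1 1 (-2) one_pos one_pos).1 hcop
    rw [one_mul, Real.sqrt_one] at this
    linarith
  · have hcop : Copositive ((1:ℝ) • Matrix.single i i (1:ℝ) + (1:ℝ) • Matrix.single j j 1
        + (-1/b : ℝ) • B) := by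
      intro u hu
      rw [hqf, hbq]
      have hkey : (-1/b) * (b * (u i * u j) + b * (u j * u i)) = -2 * (u i * u j) := by
        field_simp
        ring
      rw [hkey]
      nlinarith [sq_nonneg (u i - u j)]
    have hle := (H 1 1 (-1/b) one_pos one_pos).1 hcop
    rw [one_mul, Real.sqrt_one] at hle
    have hinv : (1/b) * b = 1 := one_div_mul_cancel (ne_of_gt hb)
    have hneg : -1/b = -(1/b) := by ring
    rw [hneg] at hle
    have h2 : 1/b ≤ 1 := by linarith
    have h3 := mul_le_mul_of_nonneg_right h2 hb.le
    rw [hinv, one_mul] at h3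
    have hb1' : 1 ≤ b := h3
    have : b = 1 := le_antisymm hb1 hb1'
    rw [hB, this]

end helpers3

/-- If ψ preserves C_n and ψ(e_{tt}) = e_{tt} + b_t with b_t ∈ T_n for all t, then ψ = id. -/
theorem stmt_17 (n : ℕ) (ψ : Sn n →ₗ[ℝ] Sn n) (hψ : ψ '' Cn n = Cn n)
    (h : ∀ (t : Fin n) (e : Sn n), e.1 = Matrix.single t t 1 →
      ∃ b ∈ Tn n, (ψ e).1 = e.1 + b.1) :
    ∀ x : Sn n, ψ x = x := by
  classical
  -- decomposition of symmetric matrices into difference of copositive ones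
  have hdecomp : ∀ x : Sn n, ∃ p q : Sn n, p ∈ Cn n ∧ q ∈ Cn n ∧ x = p - q := by
    intro x
    refine ⟨⟨Matrix.of fun k l => max (x.1 k l) 0, ?_⟩,
            ⟨Matrix.of fun k l => max (-x.1 k l) 0, ?_⟩, ?_, ?_, ?_⟩
    · exact Matrix.IsSymm.ext fun k l => by simp [x.2.apply k l]
    · exact Matrix.IsSymm.ext fun k l => by simp [x.2.apply k l]
    · exact copos_of_nonneg fun k l => le_max_right _ _
    · exact copos_of_nonneg fun k l => le_max_right _ _
    · apply Subtype.ext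
      ext k l
      simp only [AddSubgroupClass.coe_sub, Matrix.sub_apply, Matrix.of_apply]
      exact (max_zero_sub_max_neg_zero_eq_self (x.1 k l)).symm
  have hsurj : Function.Surjective ψ := by
    intro x
    obtain ⟨p, q, hp, hq, rfl⟩ := hdecomp x
    rw [← hψ] at hp hq
    obtain ⟨p', _, hpe⟩ := hp
    obtain ⟨q', _, hqe⟩ := hq
    exact ⟨p' - q', by rw [map_sub, hpe, hqe]⟩
  have hinj : Function.Injective ψ := LinearMap.injective_iff_surjective.2 hsurj
  have hfwd : ∀ a : Sn n, a ∈ Cn n → ψ a ∈ Cn n := fun a ha => by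
    rw [← hψ]; exact ⟨a, ha, rfl⟩
  have hback : ∀ a : Sn n, ψ a ∈ Cn n → a ∈ Cn n := by
    intro a ha
    rw [← hψ] at ha
    obtain ⟨c, hc, hce⟩ := ha
    rwa [← hinj hce]
  have hsym_std : ∀ t : Fin n, (Matrix.single t t (1:ℝ)).IsSymm := fun t =>
    Matrix.IsSymm.ext fun k l => by simp [std_entry, and_comm]
  have hsym_pair : ∀ i j : Fin n,
      (Matrix.single i j (1:ℝ) + Matrix.single j i 1).IsSymm := by
    intro i j
    apply Matrix.IsSymm.ext
    intro k l
    simp only [Matrix.add_apply, std_entry]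
    rw [add_comm]
    congr 1
    · exact if_congr and_comm rfl rfl
    · exact if_congr and_comm rfl rfl
  -- Step 1 : ψ fixes the diagonal matrix units
  have hfix_diag : ∀ t : Fin n, ∀ e : Sn n, e.1 = Matrix.single t t 1 → ψ e = e := by
    intro t e he
    obtain ⟨b, hbT, hψe⟩ := h t e he
    have heC : e ∈ Cn n := by
      show Copositive e.1
      rw [he]
      exact copos_of_nonneg fun k l => by rw [std_entry]; split_ifs <;> norm_num
    have hbC : b ∈ Cn n := copos_of_nonneg hbT.1
    rw [← hψ] at heC hbC
    obtain ⟨p, hpC, hpe⟩ := heC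
    obtain ⟨q, hqC, hqe⟩ := hbC
    have hsum : p + q = e := by
      apply hinj
      rw [map_add, hpe, hqe]
      apply Subtype.ext
      rw [hψe]
      simp
    have hPQ : p.1 + q.1 = Matrix.single t t 1 := by
      have h1 := congrArg Subtype.val hsum
      simp only [Submodule.coe_add] at h1
      rw [he] at h1
      exact h1
    have hp1 := extreme_ett hpC p.2 hqC q.2 hPQ
    have hpel : p = (p.1 t t) • e := by
      apply Subtype.ext
      rw [Submodule.coe_smul, he]
      exact hp1
    have hψp : (p.1 t t) • ψ e = e := by
      rw [hpel, _root_.map_smul] at hpe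
      exact hpe
    have hett : (ψ e).1 t t = 1 := by
      rw [hψe, Matrix.add_apply, hbT.2 t, he, std_entry]
      simp
    have hct : p.1 t t = 1 := by
      have h1 := congrArg (fun z : Sn n => z.1 t t) hψp
      simp only [Submodule.coe_smul, Matrix.smul_apply, smul_eq_mul] at h1
      rw [hett, he, std_entry] at h1
      simpa using h1
    rw [hct, one_smul] at hψp
    exact hψp
  -- Step 2 : ψ fixes the symmetrized off-diagonal matrix units
  have hfix_off : ∀ i j : Fin n, i ≠ j → ∀ f : Sn n,
      f.1 = Matrix.single i j 1 + Matrix.single j i 1 → ψ f = f := by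
    intro i j hij f hf
    have hH : ∀ α β s : ℝ, 0 < α → 0 < β →
        (Copositive (α • Matrix.single i i (1:ℝ) + β • Matrix.single j j 1
          + s • (ψ f).1) ↔ -Real.sqrt (α * β) ≤ s) := by
      intro α β s hα hβ
      set Eii : Sn n := ⟨Matrix.single i i 1, hsym_std i⟩ with hEii
      set Ejj : Sn n := ⟨Matrix.single j j 1, hsym_std j⟩ with hEjj
      set M : Sn n := α • Eii + β • Ejj + s • f with hM
      have hM1 : M.1 = α • Matrix.single i i (1:ℝ) + β • Matrix.single j j 1
          + s • (Matrix.single i j 1 + Matrix.single j i 1) := by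
        simp only [hM, Submodule.coe_add, Submodule.coe_smul, hEii, hEjj, hf]
      have hψM : (ψ M).1 = α • Matrix.single i i (1:ℝ)
          + β • Matrix.single j j 1 + s • (ψ f).1 := by
        have h1 : ψ M = α • ψ Eii + β • ψ Ejj + s • ψ f := by
          rw [hM, map_add, map_add, _root_.map_smul, _root_.map_smul, _root_.map_smul]
        rw [hfix_diag i Eii rfl, hfix_diag j Ejj rfl] at h1
        rw [h1]
        simp only [Submodule.coe_add, Submodule.coe_smul, hEii, hEjj]
      constructor
      · intro hcop
        have h2 : ψ M ∈ Cn n := by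
          show Copositive (ψ M).1
          rwa [hψM]
        have h3 : Copositive M.1 := hback M h2
        rw [hM1] at h3
        exact (L1 hij hα hβ s).1 h3
      · intro hs
        have hMC : M ∈ Cn n := by
          show Copositive M.1
          rw [hM1]
          exact (L1 hij hα hβ s).2 hs
        have h2 := hfwd M hMC
        have h3 : Copositive (ψ M).1 := h2
        rwa [hψM] at h3
    have hBstd := keyB hij (ψ f).2 hH
    apply Subtype.ext
    rw [hBstd, hf]
  -- Assemble : ψ fixes everything
  intro x
  set Sel : Fin n → Fin n → Sn n := fun i j =>
    ⟨Matrix.single i j 1 + Matrix.single j i 1, hsym_pair i j⟩ with hSel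
  have hSelfix : ∀ i j : Fin n, ψ (Sel i j) = Sel i j := by
    intro i j
    rcases eq_or_ne i j with rfl | hij
    · have h2 : Sel i i = (2:ℝ) • (⟨Matrix.single i i 1, hsym_std i⟩ : Sn n) := by
        apply Subtype.ext
        simp only [hSel, Submodule.coe_smul]
        rw [two_smul]
      rw [h2, _root_.map_smul, hfix_diag i _ rfl]
    · exact hfix_off i j hij _ rfl
  have hx : x = ∑ i : Fin n, ∑ j : Fin n, ((x.1 i j)/2) • Sel i j := by
    apply Subtype.ext
    rw [AddSubmonoidClass.coe_finset_sum]
    simp only [AddSubmonoidClass.coe_finset_sum, Submodule.coe_smul, hSel]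
    ext k l
    simp only [Finset.sum_apply, Matrix.sum_apply, Matrix.smul_apply, Matrix.add_apply,
      std_entry, smul_eq_mul, mul_add, mul_ite, mul_one, mul_zero, ite_and]
    rw [Finset.sum_comm]
    simp only [Finset.sum_add_distrib, Finset.sum_ite_eq', Finset.sum_ite_eq,
      Finset.mem_univ, if_true]
    rw [Finset.sum_comm]
    simp only [Finset.sum_ite_eq', Finset.sum_ite_eq, Finset.mem_univ, if_true]
    rw [x.2.apply k l]
    ring
  rw [hx, map_sum]
  simp only [map_sum, _root_.map_smul, hSelfix]
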